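/- Let q, ℓ, m, n be natural numbers with m, n ≥ ℓ and m + n ≥ 2ℓ + 1. Let G be a bipartite graph with parts M and N of sizes m and n respectively. If G has no (ℓ+1)-connected subgraph on at least q vertices, then the number of edges of G satisfies e(G) ≤ q(n − ℓ)(m − ℓ)/(m + n − 2ℓ) + (ℓ² + ℓ)(m + n − 2ℓ). -/

import Mathlib

/-- A graph `G` is `k`-connected if it has at least `k+1` vertices and removing any
set of at most `k-1` vertices leaves a connected graph. -/
def IsKConnected (k : ℕ) {V : Type*} (G : SimpleGraph V) : Prop :=
  k + 1 ≤ Nat.card V ∧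
  ∀ S : Set V, Nat.card S ≤ k - 1 → (G.induce Sᶜ).Connected

section arith
noncomputable def fbd (q ℓ m n : ℕ) : ℝ :=
  (q : ℝ) * ((n : ℝ) - ℓ) * ((m : ℝ) - ℓ) / ((m : ℝ) + (n : ℝ) - 2 * ℓ)
    + ((ℓ : ℝ) ^ 2 + ℓ) * ((m : ℝ) + (n : ℝ) - 2 * ℓ)

lemma fbd_symm (q ℓ m n : ℕ) : fbd q ℓ m n = fbd q ℓ n m := by
  unfold fbd; ring_nf

lemma fbd_base (q ℓ n : ℕ) (hn : ℓ + 1 ≤ n) : ((ℓ : ℝ) * n) ≤ fbd q ℓ ℓ n := by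
  unfold fbd
  have h1 : (1 : ℝ) ≤ (n : ℝ) - ℓ := by
    have := (Nat.cast_le (α := ℝ)).2 hn; push_cast at this ⊢; linarith
  have h0 : ((ℓ : ℝ) - ℓ) = 0 := by ring
  rw [h0, mul_zero, zero_div, zero_add]
  have : (ℓ : ℝ) + n - 2 * ℓ = (n : ℝ) - ℓ := by ring
  rw [this]
  nlinarith [sq_nonneg (ℓ : ℝ), Nat.cast_nonneg (α := ℝ) ℓ]

lemma fbd_step (q ℓ m n : ℕ) (hm : ℓ ≤ m) (hn : ℓ + 1 ≤ n) :
    fbd q ℓ m n + ((ℓ : ℝ) ^ 2 + ℓ) ≤ fbd q ℓ (m + 1) n := by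
  unfold fbd
  have hx : (0 : ℝ) ≤ (m : ℝ) - ℓ := by
    have := (Nat.cast_le (α := ℝ)).2 hm; linarith
  have hy : (1 : ℝ) ≤ (n : ℝ) - ℓ := by
    have := (Nat.cast_le (α := ℝ)).2 hn; push_cast at this; linarith
  set x : ℝ := (m : ℝ) - ℓ with hxdef
  set y : ℝ := (n : ℝ) - ℓ with hydef
  have hs : (0 : ℝ) < x + y := by linarith
  have hs1 : (0 : ℝ) < x + 1 + y := by linarith
  have hm1 : ((m : ℝ) + 1 + n - 2 * ℓ) = x + 1 + y := by rw [hxdef, hydef]; ring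
  have hm0 : ((m : ℝ) + n - 2 * ℓ) = x + y := by rw [hxdef, hydef]; ring
  have hnum : ((m : ℝ) + 1 - ℓ) = x + 1 := by rw [hxdef]; ring
  have hnum0 : ((m : ℝ) - ℓ) = x := rfl
  push_cast
  rw [hm1, hm0, hnum]
  have key : (q : ℝ) * y * x / (x + y) ≤ (q : ℝ) * y * (x + 1) / (x + 1 + y) := by
    rw [div_le_div_iff₀ hs hs1]
    have hq : (0 : ℝ) ≤ q := Nat.cast_nonneg q
    nlinarith [mul_nonneg hq (le_of_lt (lt_of_lt_of_le zero_lt_one hy))]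
  nlinarith [key, sq_nonneg (ℓ : ℝ), Nat.cast_nonneg (α := ℝ) ℓ]

lemma superadd_real (q x1 y1 x2 y2 X Y : ℝ) (hq : 0 ≤ q)
    (h1 : 1 ≤ x1) (h2 : 1 ≤ y1) (h3 : 1 ≤ x2) (h4 : 1 ≤ y2)
    (hX : x1 + x2 ≤ X) (hY : y1 + y2 ≤ Y) :
    q * y1 * x1 / (x1 + y1) + q * y2 * x2 / (x2 + y2) ≤ q * Y * X / (X + Y) := by
  have hs1 : (0:ℝ) < x1 + y1 := by linarith
  have hs2 : (0:ℝ) < x2 + y2 := by linarith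
  have hu : (0:ℝ) < x1 + x2 := by linarith
  have hv : (0:ℝ) < y1 + y2 := by linarith
  have hXpos : (0:ℝ) < X := by linarith
  have hYpos : (0:ℝ) < Y := by linarith
  have hXY : (0:ℝ) < X + Y := by linarith
  have huv : (0:ℝ) < (x1 + x2) + (y1 + y2) := by linarith
  have step1 : q * y1 * x1 / (x1 + y1) + q * y2 * x2 / (x2 + y2) ≤
      q * (y1 + y2) * (x1 + x2) / ((x1 + x2) + (y1 + y2)) := by
    rw [div_add_div _ _ (ne_of_gt hs1) (ne_of_gt hs2), div_le_div_iff₀ (by positivity) huv]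
    nlinarith [sq_nonneg (x1 * y2 - x2 * y1), mul_nonneg hq (sq_nonneg (x1*y2 - x2*y1))]
  have step2 : q * (y1 + y2) * (x1 + x2) / ((x1 + x2) + (y1 + y2)) ≤ q * Y * X / (X + Y) := by
    rw [div_le_div_iff₀ huv hXY]
    nlinarith [mul_nonneg (mul_nonneg hq hv.le) (mul_nonneg hu.le (by linarith : (0:ℝ) ≤ Y - (y1+y2))),
      mul_nonneg (mul_nonneg hq hv.le) (mul_nonneg hYpos.le (by linarith : (0:ℝ) ≤ X - (x1+x2)))]
  linarith

lemma fbd_superadd (q ℓ m1 n1 m2 n2 m n : ℕ)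
    (h1 : ℓ + 1 ≤ m1) (h2 : ℓ + 1 ≤ n1) (h3 : ℓ + 1 ≤ m2) (h4 : ℓ + 1 ≤ n2)
    (hm : m1 + m2 ≤ m + ℓ) (hn : n1 + n2 ≤ n + ℓ) :
    fbd q ℓ m1 n1 + fbd q ℓ m2 n2 ≤ fbd q ℓ m n := by
  have c1 : (1:ℝ) ≤ (m1:ℝ) - ℓ := by have := (Nat.cast_le (α := ℝ)).2 h1; push_cast at this; linarith
  have c2 : (1:ℝ) ≤ (n1:ℝ) - ℓ := by have := (Nat.cast_le (α := ℝ)).2 h2; push_cast at this; linarith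
  have c3 : (1:ℝ) ≤ (m2:ℝ) - ℓ := by have := (Nat.cast_le (α := ℝ)).2 h3; push_cast at this; linarith
  have c4 : (1:ℝ) ≤ (n2:ℝ) - ℓ := by have := (Nat.cast_le (α := ℝ)).2 h4; push_cast at this; linarith
  have cm : ((m1:ℝ) - ℓ) + ((m2:ℝ) - ℓ) ≤ (m:ℝ) - ℓ := by
    have := (Nat.cast_le (α := ℝ)).2 hm; push_cast at this; linarith
  have cn : ((n1:ℝ) - ℓ) + ((n2:ℝ) - ℓ) ≤ (n:ℝ) - ℓ := by
    have := (Nat.cast_le (α := ℝ)).2 hn; push_cast at this; linarith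
  have main := superadd_real q ((m1:ℝ)-ℓ) ((n1:ℝ)-ℓ) ((m2:ℝ)-ℓ) ((n2:ℝ)-ℓ) ((m:ℝ)-ℓ) ((n:ℝ)-ℓ)
    (Nat.cast_nonneg q) c1 c2 c3 c4 cm cn
  have hc : (0:ℝ) ≤ (ℓ:ℝ)^2 + ℓ := by positivity
  unfold fbd
  have e1 : (m1:ℝ) + n1 - 2*ℓ = ((m1:ℝ)-ℓ) + ((n1:ℝ)-ℓ) := by ring
  have e2 : (m2:ℝ) + n2 - 2*ℓ = ((m2:ℝ)-ℓ) + ((n2:ℝ)-ℓ) := by ring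
  have e3 : (m:ℝ) + n - 2*ℓ = ((m:ℝ)-ℓ) + ((n:ℝ)-ℓ) := by ring
  rw [e1, e2, e3]
  nlinarith [main, mul_le_mul_of_nonneg_left (by linarith : ((m1:ℝ)-ℓ) + ((n1:ℝ)-ℓ) + (((m2:ℝ)-ℓ) + ((n2:ℝ)-ℓ)) ≤ ((m:ℝ)-ℓ) + ((n:ℝ)-ℓ)) hc]

lemma fbd_final (q ℓ m n : ℕ) (hm : ℓ + 1 ≤ m) (hn : ℓ + 1 ≤ n) (hq : m + n ≤ q) :
    ((m : ℝ) * n) ≤ fbd q ℓ m n := by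
  have hx : (1:ℝ) ≤ (m:ℝ) - ℓ := by have := (Nat.cast_le (α := ℝ)).2 hm; push_cast at this; linarith
  have hy : (1:ℝ) ≤ (n:ℝ) - ℓ := by have := (Nat.cast_le (α := ℝ)).2 hn; push_cast at this; linarith
  have hqc : (m:ℝ) + n ≤ q := by exact_mod_cast hq
  set x : ℝ := (m:ℝ) - ℓ
  set y : ℝ := (n:ℝ) - ℓ
  have hl : (0:ℝ) ≤ ℓ := Nat.cast_nonneg ℓ
  have hs : (0:ℝ) < x + y := by linarith
  have hmx : (m:ℝ) = x + ℓ := by simp [x]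
  have hny : (n:ℝ) = y + ℓ := by simp [y]
  unfold fbd
  have e3 : (m:ℝ) + n - 2*ℓ = x + y := by rw [hmx, hny]; ring
  rw [e3, hmx, hny]
  have hnum : ((x + y) + 2*ℓ) * ((n:ℝ) - ℓ) * ((m:ℝ) - ℓ) ≤ (q:ℝ) * ((n:ℝ) - ℓ) * ((m:ℝ) - ℓ) := by
    apply mul_le_mul_of_nonneg_right _ (by linarith)
    apply mul_le_mul_of_nonneg_right _ (by linarith)
    rw [hmx, hny] at hqc; linarith
  have key : (x + ℓ) * (y + ℓ) ≤ ((x + y) + 2*ℓ) * y * x / (x + y) + ((ℓ:ℝ)^2 + ℓ) * (x + y) := by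
    rw [div_add' _ _ _ (ne_of_gt hs), le_div_iff₀ hs]
    nlinarith [mul_nonneg (mul_nonneg hl hl) (mul_pos hs (by linarith : (0:ℝ) < x + y - 1)).le,
      mul_nonneg hl (mul_pos (by linarith : (0:ℝ) < x) (by linarith : (0:ℝ) < y)).le]
  have exy : y + (ℓ:ℝ) - ℓ = y := by ring
  have exx : x + (ℓ:ℝ) - ℓ = x := by ring
  rw [exy, exx]
  calc (x + ℓ) * (y + ℓ) ≤ ((x + y) + 2*ℓ) * y * x / (x + y) + ((ℓ:ℝ)^2 + ℓ) * (x + y) := key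
    _ ≤ (q:ℝ) * y * x / (x + y) + ((ℓ:ℝ)^2 + ℓ) * (x + y) := by
        gcongr

end arith

section graph
variable {V : Type*} [Fintype V] [DecidableEq V] (G : SimpleGraph V) [DecidableRel G.Adj]
def cross (A B : Finset V) : ℕ := ∑ a ∈ A, ∑ b ∈ B, if G.Adj a b then 1 else 0

lemma cross_le (A B : Finset V) : cross G A B ≤ A.card * B.card := by
  unfold cross
  calc ∑ a ∈ A, ∑ b ∈ B, (if G.Adj a b then 1 else 0)
      ≤ ∑ a ∈ A, ∑ b ∈ B, 1 := by
        apply Finset.sum_le_sum; intro a _; apply Finset.sum_le_sum; intro b _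
        split <;> simp
    _ = A.card * B.card := by simp [Finset.sum_const, mul_comm]

lemma inner_eq (A : Finset V) (a : V) :
    (∑ b ∈ A, if G.Adj a b then 1 else 0) = (A.filter (fun b => G.Adj a b)).card := by
  rw [Finset.card_filter]

lemma cross_erase_left (A B : Finset V) (a : V) (ha : a ∈ A) :
    cross G A B = cross G (A.erase a) B + (B.filter (fun b => G.Adj a b)).card := by
  unfold cross
  rw [← Finset.sum_erase_add _ _ ha, inner_eq]

lemma cross_comm (A B : Finset V) : cross G A B = cross G B A := by
  unfold cross
  rw [Finset.sum_comm]
  congr 1; ext b; congr 1; ext a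
  simp [SimpleGraph.adj_comm]

lemma cross_erase_right (A B : Finset V) (b : V) (hb : b ∈ B) :
    cross G A B = cross G A (B.erase b) + (A.filter (fun a => G.Adj a b)).card := by
  rw [cross_comm, cross_erase_left G B A b hb, cross_comm G (B.erase b) A]
  congr 1
  rw [Finset.card_filter, Finset.card_filter]
  congr 1; ext a
  simp [SimpleGraph.adj_comm]

lemma cross_split (A B X Y : Finset V)
    (hcov : ∀ a b, a ∈ A → b ∈ B → G.Adj a b → (a ∈ X ∧ b ∈ X) ∨ (a ∈ Y ∧ b ∈ Y)) :
    cross G A B ≤ cross G (A ∩ X) (B ∩ X) + cross G (A ∩ Y) (B ∩ Y) := by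
  unfold cross
  have hX : ∀ Z C D : Finset V, (∑ a ∈ C ∩ Z, ∑ b ∈ D ∩ Z, if G.Adj a b then 1 else 0)
      = ∑ a ∈ C, ∑ b ∈ D, if a ∈ Z ∧ b ∈ Z ∧ G.Adj a b then 1 else 0 := by
    intro Z C D
    rw [← Finset.filter_mem_eq_inter, Finset.sum_filter]
    apply Finset.sum_congr rfl; intro a _
    by_cases haX : a ∈ Z
    · rw [← Finset.filter_mem_eq_inter, Finset.sum_filter, if_pos haX]
      apply Finset.sum_congr rfl; intro b _
      by_cases hbX : b ∈ Z <;> simp [haX, hbX]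
    · simp [haX]
  rw [hX, hX, ← Finset.sum_add_distrib]
  apply Finset.sum_le_sum; intro a haA
  rw [← Finset.sum_add_distrib]
  apply Finset.sum_le_sum; intro b hbB
  rcases Classical.em (G.Adj a b) with hadj | hadj
  · rcases hcov a b haA hbB hadj with ⟨h1, h2⟩ | ⟨h1, h2⟩ <;> simp [h1, h2, hadj]
  · simp [hadj]

lemma cross_total (M N : Finset V) (hpart : M ∪ N = Finset.univ) (hdisj : Disjoint M N)
    (hbip : ∀ u v, G.Adj u v → (u ∈ M ∧ v ∈ N) ∨ (u ∈ N ∧ v ∈ M)) :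
    Nat.card G.edgeSet = cross G M N := by
  classical
  have hdeg : ∀ v ∈ M, G.degree v = ∑ b ∈ N, if G.Adj v b then 1 else 0 := by
    intro v hv
    rw [SimpleGraph.degree, SimpleGraph.neighborFinset_eq_filter, Finset.card_filter]
    rw [← hpart, Finset.sum_union hdisj]
    have : ∑ b ∈ M, (if G.Adj v b then 1 else 0) = 0 := by
      apply Finset.sum_eq_zero; intro b hb
      have : ¬ G.Adj v b := by
        intro h
        rcases hbip v b h with ⟨h1, h2⟩ | ⟨h1, h2⟩
        · exact (Finset.disjoint_left.1 hdisj hb) h2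
        · exact (Finset.disjoint_left.1 hdisj hv) h1
      simp [this]
    omega
  have hdegN : ∀ v ∈ N, G.degree v = ∑ b ∈ M, if G.Adj v b then 1 else 0 := by
    intro v hv
    rw [SimpleGraph.degree, SimpleGraph.neighborFinset_eq_filter, Finset.card_filter]
    rw [← hpart, Finset.sum_union hdisj]
    have : ∑ b ∈ N, (if G.Adj v b then 1 else 0) = 0 := by
      apply Finset.sum_eq_zero; intro b hb
      have : ¬ G.Adj v b := by
        intro h
        rcases hbip v b h with ⟨h1, h2⟩ | ⟨h1, h2⟩
        · exact (Finset.disjoint_left.1 hdisj h1) hv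
        · exact (Finset.disjoint_left.1 hdisj h2) hb
      simp [this]
    omega
  have hsum : ∑ v : V, G.degree v = 2 * cross G M N := by
    calc ∑ v : V, G.degree v = ∑ v ∈ M ∪ N, G.degree v := by rw [hpart]
      _ = ∑ v ∈ M, G.degree v + ∑ v ∈ N, G.degree v := Finset.sum_union hdisj
      _ = cross G M N + cross G N M := by
          rw [Finset.sum_congr rfl hdeg, Finset.sum_congr rfl hdegN]; rfl
      _ = 2 * cross G M N := by rw [cross_comm G N M]; ring
  have h2 : ∑ v : V, G.degree v = 2 * G.edgeFinset.card :=
    SimpleGraph.sum_degrees_eq_twice_card_edges G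
  have h3 : Nat.card G.edgeSet = G.edgeFinset.card := by
    rw [Nat.card_coe_set_eq, Set.ncard_eq_toFinset_card']
    congr 1
  omega

end graph

set_option maxHeartbeats 1000000 in
lemma key_lemma {V : Type*} [Fintype V] [DecidableEq V] (q ℓ : ℕ) (G : SimpleGraph V)
    [DecidableRel G.Adj] (M N : Finset V) (hdisj : Disjoint M N)
    (hno : ∀ H : G.Subgraph, IsKConnected (ℓ + 1) H.coe → Nat.card H.verts < q) :
    ∀ k : ℕ, ∀ A B : Finset V, A ⊆ M → B ⊆ N → A.card + B.card ≤ k →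
      ℓ ≤ A.card → ℓ ≤ B.card → 2 * ℓ + 1 ≤ A.card + B.card →
      (cross G A B : ℝ) ≤ fbd q ℓ A.card B.card := by
  classical
  intro k
  induction k with
  | zero => intro A B _ _ hk _ _ hsum; omega
  | succ k ih =>
    intro A B hAM hBN hk hA hB hsum
    have hAB : Disjoint A B := hdisj.mono hAM hBN
    by_cases hbase1 : A.card = ℓ
    · have hn1 : ℓ + 1 ≤ B.card := by omega
      calc (cross G A B : ℝ) ≤ ((A.card * B.card : ℕ) : ℝ) := by
            exact_mod_cast cross_le G A B
        _ = (ℓ : ℝ) * B.card := by rw [hbase1]; push_cast; ring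
        _ ≤ fbd q ℓ ℓ B.card := fbd_base q ℓ B.card hn1
        _ = fbd q ℓ A.card B.card := by rw [hbase1]
    by_cases hbase2 : B.card = ℓ
    · have hn1 : ℓ + 1 ≤ A.card := by omega
      calc (cross G A B : ℝ) ≤ ((A.card * B.card : ℕ) : ℝ) := by
            exact_mod_cast cross_le G A B
        _ = (ℓ : ℝ) * A.card := by rw [hbase2]; push_cast; ring
        _ ≤ fbd q ℓ ℓ A.card := fbd_base q ℓ A.card hn1
        _ = fbd q ℓ A.card B.card := by rw [fbd_symm, hbase2]
    have hA1 : ℓ + 1 ≤ A.card := by omega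
    have hB1 : ℓ + 1 ≤ B.card := by omega
    set DA : ℝ := fbd q ℓ A.card B.card - fbd q ℓ (A.card - 1) B.card with hDAdef
    set DB : ℝ := fbd q ℓ A.card B.card - fbd q ℓ A.card (B.card - 1) with hDBdef
    by_cases hca : ∃ a ∈ A, ((B.filter (fun b => G.Adj a b)).card : ℝ) ≤ DA
    · obtain ⟨a, haA, hdeg⟩ := hca
      rw [cross_erase_left G A B a haA]
      have hc1 : (A.erase a).card = A.card - 1 := Finset.card_erase_of_mem haA
      have hih := ih (A.erase a) B ((A.erase_subset a).trans hAM) hBN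
        (by rw [hc1]; omega) (by rw [hc1]; omega) hB (by rw [hc1]; omega)
      rw [hc1] at hih
      push_cast
      linarith
    by_cases hcb : ∃ b ∈ B, ((A.filter (fun a => G.Adj a b)).card : ℝ) ≤ DB
    · obtain ⟨b, hbB, hdeg⟩ := hcb
      rw [cross_erase_right G A B b hbB]
      have hc1 : (B.erase b).card = B.card - 1 := Finset.card_erase_of_mem hbB
      have hih := ih A (B.erase b) hAM ((B.erase_subset b).trans hBN)
        (by rw [hc1]; omega) hA (by rw [hc1]; omega) (by rw [hc1]; omega)
      rw [hc1] at hih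
      push_cast
      linarith
    push_neg at hca hcb
    have hDAc : ((ℓ : ℝ) ^ 2 + ℓ) ≤ DA := by
      have := fbd_step q ℓ (A.card - 1) B.card (by omega) hB1
      have he : A.card - 1 + 1 = A.card := by omega
      rw [he] at this
      rw [hDAdef]; linarith
    have hDBc : ((ℓ : ℝ) ^ 2 + ℓ) ≤ DB := by
      have := fbd_step q ℓ (B.card - 1) A.card (by omega) hA1
      have he : B.card - 1 + 1 = B.card := by omega
      rw [he] at this
      rw [hDBdef, fbd_symm q ℓ A.card B.card, fbd_symm q ℓ A.card (B.card -1)]; linarith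
    have hdegA : ∀ a ∈ A, ℓ + 1 ≤ (B.filter (fun b => G.Adj a b)).card := by
      intro a ha
      have h1 := hca a ha
      have hl : (ℓ : ℝ) < ((B.filter (fun b => G.Adj a b)).card : ℝ) := by
        nlinarith [sq_nonneg (ℓ : ℝ), Nat.cast_nonneg (α := ℝ) ℓ]
      exact_mod_cast Nat.cast_lt.mp hl
    have hdegB : ∀ b ∈ B, ℓ + 1 ≤ (A.filter (fun a => G.Adj a b)).card := by
      intro b hb
      have h1 := hcb b hb
      have hl : (ℓ : ℝ) < ((A.filter (fun a => G.Adj a b)).card : ℝ) := by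
        nlinarith [sq_nonneg (ℓ : ℝ), Nat.cast_nonneg (α := ℝ) ℓ]
      exact_mod_cast Nat.cast_lt.mp hl
    -- the induced subgraph
    set s : Set V := ↑(A ∪ B) with hsdef
    set H : G.Subgraph := (⊤ : G.Subgraph).induce s with hHdef
    have hverts : H.verts = s := rfl
    have hcardverts : Nat.card H.verts = A.card + B.card := by
      rw [hverts, hsdef, Nat.card_coe_set_eq, Set.ncard_coe_finset,
        Finset.card_union_of_disjoint hAB]
    by_cases hK : IsKConnected (ℓ + 1) H.coe
    · have hlt := hno H hK
      rw [hcardverts] at hlt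
      calc (cross G A B : ℝ) ≤ ((A.card * B.card : ℕ) : ℝ) := by
            exact_mod_cast cross_le G A B
        _ = (A.card : ℝ) * B.card := by push_cast; ring
        _ ≤ fbd q ℓ A.card B.card := fbd_final q ℓ A.card B.card hA1 hB1 (by omega)
    · have hc1 : (ℓ + 1) + 1 ≤ Nat.card H.verts := by rw [hcardverts]; omega
      rw [IsKConnected] at hK
      push_neg at hK
      obtain ⟨S, hScard, hSconn⟩ := hK hc1
      have hScard' : Nat.card S ≤ ℓ := by simpa using hScard
      set SV : Set V := Subtype.val '' S with hSVdef
      have hSVfin : SV.Finite := Set.toFinite SV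
      set S₀ : Finset V := hSVfin.toFinset with hS0def
      have hS0card : S₀.card ≤ ℓ := by
        have h1 : SV.ncard = S.ncard := Set.ncard_image_of_injective S Subtype.val_injective
        have h2 : S.ncard = Nat.card S := (Nat.card_coe_set_eq S).symm
        have h3 : S₀.card = SV.ncard := (Set.ncard_eq_toFinset_card SV hSVfin).symm
        omega
      have hmemS0 : ∀ (v : V) (hv : v ∈ H.verts), ((⟨v, hv⟩ : H.verts) ∈ S ↔ v ∈ S₀) := by
        intro v hv
        constructor
        · intro h; rw [hS0def, Set.Finite.mem_toFinset]; exact ⟨_, h, rfl⟩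
        · intro h; rw [hS0def, Set.Finite.mem_toFinset] at h
          obtain ⟨u, hu, huv⟩ := h
          have he : u = ⟨v, hv⟩ := Subtype.ext huv
          exact he ▸ hu
      have hSne : Nonempty ↥(Sᶜ) := by
        by_contra hne
        have hempty : Sᶜ = ∅ :=
          Set.not_nonempty_iff_eq_empty.1 (fun h => hne (Set.nonempty_coe_sort.mpr h))
        have hSuniv : S = Set.univ := by rwa [Set.compl_empty_iff] at hempty
        rw [hSuniv, Nat.card_coe_set_eq, Set.ncard_univ] at hScard'
        omega
      have hnpc : ¬ (H.coe.induce Sᶜ).Preconnected := by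
        intro hpc; exact hSconn ((SimpleGraph.connected_iff _).2 ⟨hpc, hSne⟩)
      rw [SimpleGraph.Preconnected] at hnpc; push_neg at hnpc
      obtain ⟨x, y, hxy⟩ := hnpc
      set reach : V → Prop := fun v => ∃ (h1 : v ∈ H.verts) (h2 : (⟨v, h1⟩ : H.verts) ∈ Sᶜ),
        (H.coe.induce Sᶜ).Reachable x ⟨⟨v, h1⟩, h2⟩ with hreachdef
      have hlift : ∀ (u v : V) (hu : u ∈ H.verts) (hv : v ∈ H.verts)
          (hu2 : (⟨u, hu⟩ : H.verts) ∈ Sᶜ) (hv2 : (⟨v, hv⟩ : H.verts) ∈ Sᶜ),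
          G.Adj u v → (H.coe.induce Sᶜ).Adj ⟨⟨u, hu⟩, hu2⟩ ⟨⟨v, hv⟩, hv2⟩ := by
        intro u v hu hv hu2 hv2 hadj
        show H.coe.Adj ⟨u, hu⟩ ⟨v, hv⟩
        rw [SimpleGraph.Subgraph.coe_adj]
        exact ⟨hu, hv, hadj⟩
      have hclose : ∀ u v, reach u → v ∈ A ∪ B → v ∉ S₀ → G.Adj u v → reach v := by
        rintro u v ⟨h1, h2, hr⟩ hvAB hvS0 hadj
        have hv1 : v ∈ H.verts := by rw [hverts, hsdef]; exact_mod_cast hvAB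
        have hv2 : (⟨v, hv1⟩ : H.verts) ∈ Sᶜ := by
          simp only [Set.mem_compl_iff]
          exact fun hmem => hvS0 ((hmemS0 v hv1).1 hmem)
        exact ⟨hv1, hv2, hr.trans (hlift u v h1 hv1 h2 hv2 hadj).reachable⟩
      -- the two special vertices
      set x0 : V := ↑(↑x : H.verts) with hx0def
      have hx0mem : x0 ∈ H.verts := (↑x : H.verts).2
      have hx0eta : (⟨x0, hx0mem⟩ : H.verts) = ↑x := Subtype.ext rfl
      have hx0c : (⟨x0, hx0mem⟩ : H.verts) ∈ Sᶜ := by rw [hx0eta]; exact x.2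
      have hx0reach : reach x0 := by
        refine ⟨hx0mem, hx0c, ?_⟩
        have he : (⟨⟨x0, hx0mem⟩, hx0c⟩ : ↥(Sᶜ)) = x := Subtype.ext (Subtype.ext rfl)
        rw [he]
      have hx0AB : x0 ∈ A ∪ B := by
        have := hx0mem; rw [hverts, hsdef] at this; exact_mod_cast this
      have hx0nS0 : x0 ∉ S₀ := fun h => hx0c ((hmemS0 x0 hx0mem).2 h)
      set y0 : V := ↑(↑y : H.verts) with hy0def
      have hy0mem : y0 ∈ H.verts := (↑y : H.verts).2
      have hy0eta : (⟨y0, hy0mem⟩ : H.verts) = ↑y := Subtype.ext rfl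
      have hy0c : (⟨y0, hy0mem⟩ : H.verts) ∈ Sᶜ := by rw [hy0eta]; exact y.2
      have hy0AB : y0 ∈ A ∪ B := by
        have := hy0mem; rw [hverts, hsdef] at this; exact_mod_cast this
      have hy0nS0 : y0 ∉ S₀ := fun h => hy0c ((hmemS0 y0 hy0mem).2 h)
      have hy0nreach : ¬ reach y0 := by
        rintro ⟨h1, h2, hr⟩
        have he : (⟨⟨y0, h1⟩, h2⟩ : ↥(Sᶜ)) = y := Subtype.ext (Subtype.ext rfl)
        rw [he] at hr
        exact hxy hr
      -- the two sides
      set Acomp : Finset V := (A ∪ B).filter (fun v => v ∉ S₀ ∧ reach v) with hAcompdef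
      set Wpart : Finset V := (A ∪ B).filter (fun v => v ∉ S₀) with hWdef
      set X : Finset V := Acomp ∪ S₀ with hXdef
      set Y : Finset V := (Wpart \ Acomp) ∪ S₀ with hYdef
      have hx0Acomp : x0 ∈ Acomp := Finset.mem_filter.2 ⟨hx0AB, hx0nS0, hx0reach⟩
      have hy0W : y0 ∈ Wpart \ Acomp := Finset.mem_sdiff.2
        ⟨Finset.mem_filter.2 ⟨hy0AB, hy0nS0⟩, fun h => hy0nreach (Finset.mem_filter.1 h).2.2⟩
      have hcov : ∀ a b, a ∈ A → b ∈ B → G.Adj a b → (a ∈ X ∧ b ∈ X) ∨ (a ∈ Y ∧ b ∈ Y) := by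
        intro a b haA hbB hadj
        have haAB : a ∈ A ∪ B := Finset.mem_union_left _ haA
        have hbAB : b ∈ A ∪ B := Finset.mem_union_right _ hbB
        by_cases haS : a ∈ S₀ <;> by_cases hbS : b ∈ S₀
        · exact Or.inl ⟨Finset.mem_union_right _ haS, Finset.mem_union_right _ hbS⟩
        · by_cases hrb : reach b
          · exact Or.inl ⟨Finset.mem_union_right _ haS,
              Finset.mem_union_left _ (Finset.mem_filter.2 ⟨hbAB, hbS, hrb⟩)⟩
          · exact Or.inr ⟨Finset.mem_union_right _ haS,
              Finset.mem_union_left _ (Finset.mem_sdiff.2 ⟨Finset.mem_filter.2 ⟨hbAB, hbS⟩,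
                fun h => hrb (Finset.mem_filter.1 h).2.2⟩)⟩
        · by_cases hra : reach a
          · exact Or.inl ⟨Finset.mem_union_left _ (Finset.mem_filter.2 ⟨haAB, haS, hra⟩),
              Finset.mem_union_right _ hbS⟩
          · exact Or.inr ⟨Finset.mem_union_left _ (Finset.mem_sdiff.2
              ⟨Finset.mem_filter.2 ⟨haAB, haS⟩, fun h => hra (Finset.mem_filter.1 h).2.2⟩),
              Finset.mem_union_right _ hbS⟩
        · by_cases hra : reach a
          · have hrb : reach b := hclose a b hra hbAB hbS hadj
            exact Or.inl ⟨Finset.mem_union_left _ (Finset.mem_filter.2 ⟨haAB, haS, hra⟩),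
              Finset.mem_union_left _ (Finset.mem_filter.2 ⟨hbAB, hbS, hrb⟩)⟩
          · have hrb : ¬ reach b := fun hrb => hra (hclose b a hrb haAB haS hadj.symm)
            exact Or.inr ⟨Finset.mem_union_left _ (Finset.mem_sdiff.2
                ⟨Finset.mem_filter.2 ⟨haAB, haS⟩, fun h => hra (Finset.mem_filter.1 h).2.2⟩),
              Finset.mem_union_left _ (Finset.mem_sdiff.2
                ⟨Finset.mem_filter.2 ⟨hbAB, hbS⟩, fun h => hrb (Finset.mem_filter.1 h).2.2⟩)⟩
      have side : ∀ Z : Finset V, Z ⊆ A ∪ B →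
          (∀ u v, u ∈ Z → v ∈ A ∪ B → G.Adj u v → v ∈ Z ∪ S₀) →
          Z.Nonempty →
          ℓ + 1 ≤ (A ∩ (Z ∪ S₀)).card ∧ ℓ + 1 ≤ (B ∩ (Z ∪ S₀)).card := by
        rintro Z hZsub hZclose ⟨w, hw⟩
        have hBfromA : ∀ a ∈ A ∩ Z, ℓ + 1 ≤ (B ∩ (Z ∪ S₀)).card := by
          intro a ha
          rw [Finset.mem_inter] at ha
          have hsub : B.filter (fun b => G.Adj a b) ⊆ B ∩ (Z ∪ S₀) := by
            intro b hb
            rw [Finset.mem_filter] at hb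
            exact Finset.mem_inter.2 ⟨hb.1,
              hZclose a b ha.2 (Finset.mem_union_right _ hb.1) hb.2⟩
          exact le_trans (hdegA a ha.1) (Finset.card_le_card hsub)
        have hAfromB : ∀ b ∈ B ∩ Z, ℓ + 1 ≤ (A ∩ (Z ∪ S₀)).card := by
          intro b hb
          rw [Finset.mem_inter] at hb
          have hsub : A.filter (fun a => G.Adj a b) ⊆ A ∩ (Z ∪ S₀) := by
            intro a ha
            rw [Finset.mem_filter] at ha
            exact Finset.mem_inter.2 ⟨ha.1,
              hZclose b a hb.2 (Finset.mem_union_left _ ha.1) ha.2.symm⟩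
          exact le_trans (hdegB b hb.1) (Finset.card_le_card hsub)
        have hext : ∀ (C : Finset V), ℓ + 1 ≤ (C ∩ (Z ∪ S₀)).card → (C ∩ Z).Nonempty := by
          intro C hC
          by_contra hne
          rw [Finset.not_nonempty_iff_eq_empty] at hne
          have hsub2 : C ∩ (Z ∪ S₀) ⊆ C ∩ S₀ := by
            intro v hv; rw [Finset.mem_inter, Finset.mem_union] at hv
            rcases hv.2 with h | h
            · exact absurd (Finset.mem_inter.2 ⟨hv.1, h⟩)
                (by rw [hne]; exact Finset.notMem_empty v)
            · exact Finset.mem_inter.2 ⟨hv.1, h⟩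
          have hc2 := Finset.card_le_card hsub2
          have hc3 : (C ∩ S₀).card ≤ S₀.card := Finset.card_le_card Finset.inter_subset_right
          omega
        rcases Finset.mem_union.1 (hZsub hw) with hwA | hwB
        · have hB' := hBfromA w (Finset.mem_inter.2 ⟨hwA, hw⟩)
          obtain ⟨b, hb⟩ := hext B hB'
          exact ⟨hAfromB b hb, hB'⟩
        · have hA' := hAfromB w (Finset.mem_inter.2 ⟨hwB, hw⟩)
          obtain ⟨a, ha⟩ := hext A hA'
          exact ⟨hA', hBfromA a ha⟩
      have hcloseX : ∀ u v, u ∈ Acomp → v ∈ A ∪ B → G.Adj u v → v ∈ Acomp ∪ S₀ := by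
        intro u v hu hv hadj
        by_cases hvS : v ∈ S₀
        · exact Finset.mem_union_right _ hvS
        · have hru := (Finset.mem_filter.1 hu).2.2
          exact Finset.mem_union_left _
            (Finset.mem_filter.2 ⟨hv, hvS, hclose u v hru hv hvS hadj⟩)
      have hcloseY : ∀ u v, u ∈ Wpart \ Acomp → v ∈ A ∪ B → G.Adj u v →
          v ∈ (Wpart \ Acomp) ∪ S₀ := by
        intro u v hu hv hadj
        rw [Finset.mem_sdiff] at hu
        have huAB := (Finset.mem_filter.1 hu.1).1
        have huS : u ∉ S₀ := (Finset.mem_filter.1 hu.1).2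
        have hunr : ¬ reach u := fun hr => hu.2 (Finset.mem_filter.2 ⟨huAB, huS, hr⟩)
        by_cases hvS : v ∈ S₀
        · exact Finset.mem_union_right _ hvS
        · have hvnr : ¬ reach v := fun hr => hunr (hclose v u hr huAB huS hadj.symm)
          exact Finset.mem_union_left _ (Finset.mem_sdiff.2
            ⟨Finset.mem_filter.2 ⟨hv, hvS⟩, fun h => hvnr (Finset.mem_filter.1 h).2.2⟩)
      obtain ⟨hAX, hBX⟩ := side Acomp (Finset.filter_subset _ _) hcloseX ⟨x0, hx0Acomp⟩
      obtain ⟨hAY, hBY⟩ := side (Wpart \ Acomp)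
        ((Finset.sdiff_subset).trans (Finset.filter_subset _ _)) hcloseY ⟨y0, hy0W⟩
      rw [← hXdef] at hAX hBX
      rw [← hYdef] at hAY hBY
      have hy0X : y0 ∉ X := by
        rw [hXdef]
        rw [Finset.mem_union]
        rintro (h | h)
        · exact hy0nreach (Finset.mem_filter.1 h).2.2
        · exact hy0nS0 h
      have hx0Y : x0 ∉ Y := by
        rw [hYdef]
        rw [Finset.mem_union]
        rintro (h | h)
        · exact (Finset.mem_sdiff.1 h).2 hx0Acomp
        · exact hx0nS0 h
      have hcardgen : ∀ (T : Finset V) (v0 : V), v0 ∈ A ∪ B → v0 ∉ T →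
          (A ∩ T).card + (B ∩ T).card ≤ A.card + B.card - 1 := by
        intro T v0 hv0AB hv0T
        have hdisjT : Disjoint (A ∩ T) (B ∩ T) :=
          hAB.mono Finset.inter_subset_left Finset.inter_subset_left
        have hsub : (A ∩ T) ∪ (B ∩ T) ⊆ (A ∪ B).erase v0 := by
          intro v hv
          rw [Finset.mem_union, Finset.mem_inter, Finset.mem_inter] at hv
          apply Finset.mem_erase.2
          constructor
          · rintro rfl
            rcases hv with h | h <;> exact hv0T h.2
          · rcases hv with h | h
            · exact Finset.mem_union_left _ h.1
            · exact Finset.mem_union_right _ h.1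
        calc (A ∩ T).card + (B ∩ T).card = ((A ∩ T) ∪ (B ∩ T)).card :=
              (Finset.card_union_of_disjoint hdisjT).symm
          _ ≤ ((A ∪ B).erase v0).card := Finset.card_le_card hsub
          _ = (A ∪ B).card - 1 := Finset.card_erase_of_mem hv0AB
          _ = A.card + B.card - 1 := by rw [Finset.card_union_of_disjoint hAB]
      have hcardX := hcardgen X y0 hy0AB hy0X
      have hcardY := hcardgen Y x0 hx0AB hx0Y
      have ih1 := ih (A ∩ X) (B ∩ X) (Finset.inter_subset_left.trans hAM)
        (Finset.inter_subset_left.trans hBN) (by omega) (by omega) (by omega) (by omega)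
      have ih2 := ih (A ∩ Y) (B ∩ Y) (Finset.inter_subset_left.trans hAM)
        (Finset.inter_subset_left.trans hBN) (by omega) (by omega) (by omega) (by omega)
      -- counting for superadditivity
      have hS0split : (A ∩ S₀).card + (B ∩ S₀).card ≤ ℓ := by
        have hd : Disjoint (A ∩ S₀) (B ∩ S₀) :=
          hAB.mono Finset.inter_subset_left Finset.inter_subset_left
        have hsub : (A ∩ S₀) ∪ (B ∩ S₀) ⊆ S₀ :=
          Finset.union_subset Finset.inter_subset_right Finset.inter_subset_right
        have := Finset.card_le_card hsub
        rw [Finset.card_union_of_disjoint hd] at this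
        omega
      have hsplitcard : ∀ C : Finset V, C ⊆ A ∪ B →
          (C ∩ X).card + (C ∩ Y).card ≤ C.card + (C ∩ S₀).card := by
        intro C hCsub
        have hd1 : Disjoint Acomp S₀ := by
          rw [Finset.disjoint_left]; intro v hv; exact (Finset.mem_filter.1 hv).2.1
        have hd1' : Disjoint (Wpart \ Acomp) S₀ := by
          rw [Finset.disjoint_left]; intro v hv
          exact (Finset.mem_filter.1 (Finset.mem_sdiff.1 hv).1).2
        have e1 : (C ∩ X).card ≤ (C ∩ Acomp).card + (C ∩ S₀).card := by
          rw [hXdef, Finset.inter_union_distrib_left]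
          exact Finset.card_union_le _ _
        have e2 : (C ∩ Y).card ≤ (C ∩ (Wpart \ Acomp)).card + (C ∩ S₀).card := by
          rw [hYdef, Finset.inter_union_distrib_left]
          exact Finset.card_union_le _ _
        have e3 : (C ∩ Acomp).card + (C ∩ (Wpart \ Acomp)).card + (C ∩ S₀).card ≤ C.card := by
          have d12 : Disjoint (C ∩ Acomp) (C ∩ (Wpart \ Acomp)) := by
            rw [Finset.disjoint_left]
            intro v hv hv2
            exact (Finset.mem_sdiff.1 (Finset.mem_inter.1 hv2).2).2 (Finset.mem_inter.1 hv).2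
          have d3 : Disjoint ((C ∩ Acomp) ∪ (C ∩ (Wpart \ Acomp))) (C ∩ S₀) := by
            rw [Finset.disjoint_left]
            intro v hv hv2
            have hvS := (Finset.mem_inter.1 hv2).2
            rcases Finset.mem_union.1 hv with h | h
            · exact Finset.disjoint_left.1 hd1 (Finset.mem_inter.1 h).2 hvS
            · exact Finset.disjoint_left.1 hd1' (Finset.mem_inter.1 h).2 hvS
          have hsub : ((C ∩ Acomp) ∪ (C ∩ (Wpart \ Acomp))) ∪ (C ∩ S₀) ⊆ C := by
            intro v hv
            rcases Finset.mem_union.1 hv with h | h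
            · rcases Finset.mem_union.1 h with h' | h' <;> exact (Finset.mem_inter.1 h').1
            · exact (Finset.mem_inter.1 h).1
          have := Finset.card_le_card hsub
          rw [Finset.card_union_of_disjoint d3, Finset.card_union_of_disjoint d12] at this
          omega
        omega
      have hmA := hsplitcard A Finset.subset_union_left
      have hmB := hsplitcard B Finset.subset_union_right
      have hsa := fbd_superadd q ℓ (A ∩ X).card (B ∩ X).card (A ∩ Y).card (B ∩ Y).card
        A.card B.card hAX hBX hAY hBY (by omega) (by omega)
      have hsplit := cross_split G A B X Y hcov
      calc (cross G A B : ℝ)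
          ≤ ((cross G (A ∩ X) (B ∩ X) + cross G (A ∩ Y) (B ∩ Y) : ℕ) : ℝ) := by
            exact_mod_cast hsplit
        _ = (cross G (A ∩ X) (B ∩ X) : ℝ) + (cross G (A ∩ Y) (B ∩ Y) : ℝ) := by push_cast; ring
        _ ≤ fbd q ℓ (A ∩ X).card (B ∩ X).card + fbd q ℓ (A ∩ Y).card (B ∩ Y).card :=
            add_le_add ih1 ih2
        _ ≤ fbd q ℓ A.card B.card := hsa

theorem stmt_0 {V : Type*} [Fintype V] [DecidableEq V] (q ℓ : ℕ) (G : SimpleGraph V)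
    (M N : Finset V) (hpart : M ∪ N = Finset.univ) (hdisj : Disjoint M N)
    (hbip : ∀ u v, G.Adj u v → (u ∈ M ∧ v ∈ N) ∨ (u ∈ N ∧ v ∈ M))
    (hm : ℓ ≤ M.card) (hn : ℓ ≤ N.card)
    (hmn : 2 * ℓ + 1 ≤ M.card + N.card)
    (hno : ∀ H : G.Subgraph, IsKConnected (ℓ + 1) H.coe → Nat.card H.verts < q) :
    (Nat.card G.edgeSet : ℝ) ≤
      (q : ℝ) * ((N.card : ℝ) - ℓ) * ((M.card : ℝ) - ℓ) /
          ((M.card : ℝ) + (N.card : ℝ) - 2 * ℓ)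
        + ((ℓ : ℝ) ^ 2 + ℓ) * ((M.card : ℝ) + (N.card : ℝ) - 2 * ℓ) := by
  classical
  letI : DecidableRel G.Adj := Classical.decRel _
  have hkey := key_lemma q ℓ G M N hdisj hno (M.card + N.card) M N
    (subset_refl M) (subset_refl N) le_rfl hm hn hmn
  rw [cross_total G M N hpart hdisj hbip]
  simpa [fbd] using hkey
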